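/- Let (X, d_X) and (Y, d_Y) be compact metric spaces, and equip X × Y with the metric d((x1,y1),(x2,y2)) = max(d_X(x1,x2), d_Y(y1,y2)). Then for every ε > 0, Widim_ε(X × Y) ≤ Widim_ε(X, d_X) + Widim_ε(Y, d_Y). -/

import Mathlib

open Metric Filter Set
open scoped ENNReal

set_option maxHeartbeats 1000000

noncomputable section

/-- The diameter of a set with respect to an abstract distance function `d`. -/
def setDiam {X : Type*} (d : X → X → ℝ) (s : Set X) : ℝ :=
  sSup (insert 0 {r : ℝ | ∃ x ∈ s, ∃ y ∈ s, d x y = r})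

/-- `P ⊆ ℝ^m` is a (finite) polyhedron of dimension at most `n`: a finite union of
simplices (convex hulls of affinely independent finite sets) each with at most `n+1` vertices. -/
def IsPolyhedronOfDim {m : ℕ} (n : ℕ) (P : Set (EuclideanSpace ℝ (Fin m))) : Prop :=
  ∃ S : Finset (Finset (EuclideanSpace ℝ (Fin m))),
    (∀ s ∈ S, AffineIndependent ℝ (fun v : {x // x ∈ s} => (v : EuclideanSpace ℝ (Fin m))) ∧
      s.card ≤ n + 1) ∧
    P = ⋃ s ∈ S, convexHull ℝ (s : Set (EuclideanSpace ℝ (Fin m)))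

/-- `Widim_ε(X, d)`: the minimal integer `n ≥ 0` such that there exist an `n`-dimensional
polyhedron `P` and a continuous map `f : X → P` all of whose fibers have `d`-diameter `≤ ε`
(an `ε`-embedding). -/
def widim (X : Type*) [TopologicalSpace X] (d : X → X → ℝ) (ε : ℝ) : ℕ :=
  sInf {n : ℕ | ∃ (m : ℕ) (P : Set (EuclideanSpace ℝ (Fin m))) (f : X → P),
    IsPolyhedronOfDim n P ∧ Continuous f ∧ ∀ y : P, setDiam d (f ⁻¹' {y}) ≤ ε}
namespace WidimAux

lemma setDiam_le {X : Type*} {d : X → X → ℝ} {s : Set X} {ε : ℝ} (hε : 0 ≤ ε)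
    (h : ∀ x ∈ s, ∀ y ∈ s, d x y ≤ ε) : setDiam d s ≤ ε := by
  apply csSup_le (Set.insert_nonempty _ _)
  rintro r (rfl | ⟨x, hx, y, hy, rfl⟩)
  · exact hε
  · exact h x hx y hy

lemma dist_le_setDiam {X : Type*} [MetricSpace X] [CompactSpace X] {s : Set X} {x y : X}
    (hx : x ∈ s) (hy : y ∈ s) : dist x y ≤ setDiam dist s := by
  obtain ⟨C, hC⟩ := Metric.isBounded_iff.1 (isCompact_univ (X := X)).isBounded
  apply le_csSup
  · refine ⟨max C 0, ?_⟩
    rintro r (rfl | ⟨a, _, b, _, rfl⟩)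
    · exact le_max_right _ _
    · exact le_trans (hC (Set.mem_univ a) (Set.mem_univ b)) (le_max_left _ _)
  · exact Set.mem_insert_iff.2 (Or.inr ⟨x, hx, y, hy, rfl⟩)

lemma isPolyhedron_biUnion {m n : ℕ} (W : Finset (Finset (EuclideanSpace ℝ (Fin m))))
    (hW : ∀ w ∈ W, ∀ u ⊆ w,
      AffineIndependent ℝ ((↑) : {x // x ∈ u} → EuclideanSpace ℝ (Fin m)) → u.card ≤ n + 1) :
    IsPolyhedronOfDim n (⋃ w ∈ W, convexHull ℝ (w : Set (EuclideanSpace ℝ (Fin m)))) := by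
  classical
  refine ⟨W.biUnion (fun w => w.powerset.filter
      (fun u => AffineIndependent ℝ ((↑) : {x // x ∈ u} → EuclideanSpace ℝ (Fin m)))), ?_, ?_⟩
  · intro s hs
    simp only [Finset.mem_biUnion, Finset.mem_filter, Finset.mem_powerset] at hs
    obtain ⟨w, hw, hsub, hai⟩ := hs
    exact ⟨hai, hW w hw s hsub hai⟩
  · ext x
    simp only [Set.mem_iUnion, Finset.mem_biUnion, Finset.mem_filter, Finset.mem_powerset]
    constructor
    · rintro ⟨w, hw, hx⟩
      rw [convexHull_eq_union] at hx
      simp only [Set.mem_iUnion] at hx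
      obtain ⟨t, hts, hai, hx⟩ := hx
      exact ⟨t, ⟨w, hw, by exact_mod_cast hts, hai⟩, hx⟩
    · rintro ⟨u, ⟨w, hw, hsub, hai⟩, hx⟩
      exact ⟨w, hw, convexHull_mono (by exact_mod_cast hsub) hx⟩

lemma vectorSpan_prod_le {E F : Type*} [NormedAddCommGroup E] [NormedAddCommGroup F]
    [NormedSpace ℝ E] [NormedSpace ℝ F] (A : Set E) (B : Set F) :
    vectorSpan ℝ (A ×ˢ B) ≤ (vectorSpan ℝ A).prod (vectorSpan ℝ B) := by
  rw [vectorSpan_def]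
  apply Submodule.span_le.2
  rintro v ⟨p, hp, q, hq, rfl⟩
  exact ⟨vsub_mem_vectorSpan ℝ hp.1 hq.1, vsub_mem_vectorSpan ℝ hp.2 hq.2⟩

lemma finrank_prod_le {E F : Type*} [NormedAddCommGroup E] [NormedAddCommGroup F]
    [NormedSpace ℝ E] [NormedSpace ℝ F] [FiniteDimensional ℝ E] [FiniteDimensional ℝ F]
    (p : Submodule ℝ E) (q : Submodule ℝ F) :
    Module.finrank ℝ (p.prod q) ≤ Module.finrank ℝ p + Module.finrank ℝ q := by
  rw [LinearMap.prod_eq_sup_map]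
  have h := Submodule.finrank_sup_add_finrank_inf_eq
    (p.map (LinearMap.inl ℝ E F)) (q.map (LinearMap.inr ℝ E F))
  have h1 : Module.finrank ℝ (p.map (LinearMap.inl ℝ E F)) = Module.finrank ℝ p :=
    ((Submodule.equivMapOfInjective _ LinearMap.inl_injective p).symm.finrank_eq)
  have h2 : Module.finrank ℝ (q.map (LinearMap.inr ℝ E F)) = Module.finrank ℝ q :=
    ((Submodule.equivMapOfInjective _ LinearMap.inr_injective q).symm.finrank_eq)
  omega



def prodE (m₁ m₂ : ℕ) :
    (EuclideanSpace ℝ (Fin m₁) × EuclideanSpace ℝ (Fin m₂)) ≃ₗ[ℝ]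
      EuclideanSpace ℝ (Fin (m₁ + m₂)) :=
  ((WithLp.linearEquiv 2 ℝ _).prodCongr (WithLp.linearEquiv 2 ℝ _)).trans
    (((LinearEquiv.sumArrowLequivProdArrow (Fin m₁) (Fin m₂) ℝ ℝ).symm.trans
      (LinearEquiv.funCongrLeft ℝ ℝ finSumFinEquiv.symm)).trans
      (WithLp.linearEquiv 2 ℝ _).symm)

lemma card_le_of_ai {m₁ m₂ : ℕ} {a b : ℕ}
    [DecidableEq (EuclideanSpace ℝ (Fin (m₁ + m₂)))]
    {s : Finset (EuclideanSpace ℝ (Fin m₁))} {t : Finset (EuclideanSpace ℝ (Fin m₂))}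
    (hs : s.card ≤ a + 1) (ht : t.card ≤ b + 1)
    (e : (EuclideanSpace ℝ (Fin m₁) × EuclideanSpace ℝ (Fin m₂)) ≃ₗ[ℝ]
      EuclideanSpace ℝ (Fin (m₁ + m₂)))
    {u : Finset (EuclideanSpace ℝ (Fin (m₁ + m₂)))} (hu : u ⊆ (s ×ˢ t).image e)
    (hai : AffineIndependent ℝ ((↑) : {x // x ∈ u} → EuclideanSpace ℝ (Fin (m₁ + m₂)))) :
    u.card ≤ (a + b) + 1 := by
  classical
  rcases u.eq_empty_or_nonempty with rfl | hune
  · simp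
  obtain ⟨x₀, hx₀⟩ := hune
  obtain ⟨p₀, hp₀, -⟩ := Finset.mem_image.1 (hu hx₀)
  have hsne : s.Nonempty := ⟨p₀.1, (Finset.mem_product.1 hp₀).1⟩
  have htne : t.Nonempty := ⟨p₀.2, (Finset.mem_product.1 hp₀).2⟩
  have hsub : ⇑e.symm '' ↑u ⊆ ((↑s : Set (EuclideanSpace ℝ (Fin m₁))) ×ˢ (↑t : Set (EuclideanSpace ℝ (Fin m₂)))) := by
    rintro z ⟨x, hx, rfl⟩
    obtain ⟨p, hp, rfl⟩ := Finset.mem_image.1 (hu hx)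
    rw [e.symm_apply_apply]
    exact ⟨(Finset.mem_product.1 hp).1, (Finset.mem_product.1 hp).2⟩
  have hcomp : AffineIndependent ℝ
      (⇑e.symm.toLinearMap.toAffineMap ∘ ((↑) : {x // x ∈ u} → _)) :=
    hai.map' e.symm.toLinearMap.toAffineMap
      (by rw [LinearMap.coe_toAffineMap]; exact e.symm.injective)
  have hcard := hcomp.card_le_finrank_succ
  rw [Fintype.card_coe] at hcard
  have hrange : Set.range (⇑e.symm.toLinearMap.toAffineMap ∘ ((↑) : {x // x ∈ u} → _)) =
      ⇑e.symm '' (↑u : Set (EuclideanSpace ℝ (Fin (m₁ + m₂)))) := by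
    rw [Set.range_comp, Subtype.range_coe, LinearMap.coe_toAffineMap]
    rfl
  rw [hrange] at hcard
  have h1 : Module.finrank ℝ (vectorSpan ℝ (⇑e.symm '' (↑u : Set (EuclideanSpace ℝ (Fin (m₁ + m₂)))))) ≤
      Module.finrank ℝ ((vectorSpan ℝ (↑s : Set (EuclideanSpace ℝ (Fin m₁)))).prod (vectorSpan ℝ (↑t : Set (EuclideanSpace ℝ (Fin m₂))))) :=
    Submodule.finrank_mono ((vectorSpan_mono ℝ hsub).trans (vectorSpan_prod_le _ _))
  have h2 := finrank_prod_le (vectorSpan ℝ (↑s : Set (EuclideanSpace ℝ (Fin m₁)))) (vectorSpan ℝ (↑t : Set (EuclideanSpace ℝ (Fin m₂))))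
  have hs1 : s.card = (s.card - 1) + 1 := by
    have := Finset.card_pos.2 hsne; omega
  have ht1 : t.card = (t.card - 1) + 1 := by
    have := Finset.card_pos.2 htne; omega
  have h3 : Module.finrank ℝ (vectorSpan ℝ (↑s : Set (EuclideanSpace ℝ (Fin m₁)))) ≤ s.card - 1 := by
    have := finrank_vectorSpan_image_finset_le ℝ
      (id : EuclideanSpace ℝ (Fin m₁) → EuclideanSpace ℝ (Fin m₁)) s hs1
    rwa [Finset.image_id] at this
  have h4 : Module.finrank ℝ (vectorSpan ℝ (↑t : Set (EuclideanSpace ℝ (Fin m₂)))) ≤ t.card - 1 := by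
    have := finrank_vectorSpan_image_finset_le ℝ
      (id : EuclideanSpace ℝ (Fin m₂) → EuclideanSpace ℝ (Fin m₂)) t ht1
    rwa [Finset.image_id] at this
  omega

lemma isPolyhedron_image_prod {m₁ m₂ a b : ℕ} {P : Set (EuclideanSpace ℝ (Fin m₁))}
    {Q : Set (EuclideanSpace ℝ (Fin m₂))}
    (hP : IsPolyhedronOfDim a P) (hQ : IsPolyhedronOfDim b Q)
    (e : (EuclideanSpace ℝ (Fin m₁) × EuclideanSpace ℝ (Fin m₂)) ≃ₗ[ℝ]
      EuclideanSpace ℝ (Fin (m₁ + m₂))) :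
    IsPolyhedronOfDim (a + b) (⇑e '' (P ×ˢ Q)) := by
  classical
  obtain ⟨S₁, hS₁, rfl⟩ := hP
  obtain ⟨S₂, hS₂, rfl⟩ := hQ
  have himg : ∀ (s : Finset (EuclideanSpace ℝ (Fin m₁))) (t : Finset (EuclideanSpace ℝ (Fin m₂))),
      convexHull ℝ (↑((s ×ˢ t).image ⇑e) : Set (EuclideanSpace ℝ (Fin (m₁ + m₂)))) =
        ⇑e '' ((convexHull ℝ (↑s : Set _)) ×ˢ (convexHull ℝ (↑t : Set _))) := by
    intro s t
    rw [Finset.coe_image, Finset.coe_product, ← convexHull_prod]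
    rw [show (⇑e : _ → _) = ⇑e.toLinearMap from rfl, LinearMap.image_convexHull]
  have key : ⇑e '' ((⋃ s ∈ S₁, convexHull ℝ (↑s : Set _)) ×ˢ (⋃ t ∈ S₂, convexHull ℝ (↑t : Set _)))
      = ⋃ w ∈ (S₁ ×ˢ S₂).image (fun p => (p.1 ×ˢ p.2).image ⇑e), convexHull ℝ (↑w : Set _) := by
    ext x
    constructor
    · rintro ⟨⟨y₁, y₂⟩, ⟨hy₁, hy₂⟩, rfl⟩
      simp only [Set.mem_iUnion, exists_prop] at hy₁ hy₂
      obtain ⟨s, hs, h1⟩ := hy₁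
      obtain ⟨t, ht, h2⟩ := hy₂
      refine Set.mem_biUnion (Finset.mem_image_of_mem _ (Finset.mk_mem_product hs ht)) ?_
      rw [himg s t]
      exact ⟨(y₁, y₂), ⟨h1, h2⟩, rfl⟩
    · intro hx
      simp only [Set.mem_iUnion, Finset.mem_image, Finset.mem_product, exists_prop,
        Prod.exists] at hx
      obtain ⟨w, ⟨s, t, ⟨hs, ht⟩, rfl⟩, hxw⟩ := hx
      rw [himg s t] at hxw
      obtain ⟨⟨y₁, y₂⟩, ⟨h1, h2⟩, rfl⟩ := hxw
      exact ⟨(y₁, y₂), ⟨Set.mem_biUnion hs h1, Set.mem_biUnion ht h2⟩, rfl⟩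
  rw [key]
  apply isPolyhedron_biUnion
  intro w hw u hu hai
  simp only [Finset.mem_image, Finset.mem_product, Prod.exists] at hw
  obtain ⟨s, t, ⟨hs, ht⟩, rfl⟩ := hw
  exact card_le_of_ai (hS₁ s hs).2 (hS₂ t ht).2 e hu hai


lemma isPolyhedron_convexHull {m n : ℕ} (v : Finset (EuclideanSpace ℝ (Fin m)))
    (hc : v.card ≤ n + 1) :
    IsPolyhedronOfDim n (convexHull ℝ (↑v : Set (EuclideanSpace ℝ (Fin m)))) := by
  classical
  have h := isPolyhedron_biUnion ({v} : Finset _) (n := n) ?_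
  · simpa using h
  · intro w hw u hu _
    rw [Finset.mem_singleton] at hw
    subst hw
    exact le_trans (Finset.card_le_card hu) hc

lemma exists_widim_witness (Z : Type*) [MetricSpace Z] [CompactSpace Z] {ε : ℝ} (hε : 0 < ε) :
    {n : ℕ | ∃ (m : ℕ) (P : Set (EuclideanSpace ℝ (Fin m))) (f : Z → P),
      IsPolyhedronOfDim n P ∧ Continuous f ∧ ∀ y : P, setDiam dist (f ⁻¹' {y}) ≤ ε}.Nonempty := by
  classical
  rcases isEmpty_or_nonempty Z with hZ | hZ
  · refine ⟨0, 0, ∅, fun z => (IsEmpty.false z).elim, ⟨∅, by simp, by simp⟩, ?_, ?_⟩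
    · exact continuous_def.2 fun s _ => by
        rw [Set.eq_empty_of_isEmpty ((fun z => (IsEmpty.false z).elim) ⁻¹' s)]
        exact isOpen_empty
    · exact fun y => ((Set.notMem_empty _) y.2).elim
  · obtain ⟨t, ht⟩ := IsCompact.elim_finite_subcover (isCompact_univ (X := Z))
      (fun z : Z => Metric.ball z (ε / 3)) (fun z => Metric.isOpen_ball)
      (fun z _ => Set.mem_iUnion.2 ⟨z, Metric.mem_ball_self (by linarith)⟩)
    set k := t.card with hk
    set c : Fin k → Z := fun i => ↑(t.equivFin.symm i) with hcdef
    have hc : ∀ z : Z, ∃ i, dist z (c i) < ε / 3 := by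
      intro z
      have hz := ht (Set.mem_univ z)
      simp only [Set.mem_iUnion, Metric.mem_ball, exists_prop] at hz
      obtain ⟨w, hw, hd⟩ := hz
      refine ⟨t.equivFin ⟨w, hw⟩, ?_⟩
      simpa [hcdef] using hd
    set g : Fin k → Z → ℝ := fun i z => max (ε / 3 - dist z (c i)) 0 with hgdef
    have hg0 : ∀ i z, 0 ≤ g i z := fun i z => le_max_right _ _
    have hgc : ∀ i, Continuous (g i) := fun i =>
      ((continuous_const.sub (continuous_id.dist continuous_const)).max continuous_const)
    set Sf : Z → ℝ := fun z => ∑ i, g i z with hSdef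
    have hSc : Continuous Sf := by
      apply continuous_finset_sum
      exact fun i _ => hgc i
    have hSpos : ∀ z, 0 < Sf z := by
      intro z
      obtain ⟨i, hi⟩ := hc z
      have hgi : 0 < g i z := lt_max_of_lt_left (by linarith)
      exact Finset.sum_pos' (fun j _ => hg0 j z) ⟨i, Finset.mem_univ i, hgi⟩
    set F0 : Z → (Fin k → ℝ) := fun z i => g i z / Sf z with hF0def
    have hF0c : Continuous F0 :=
      continuous_pi fun i => (hgc i).div hSc (fun z => (hSpos z).ne')
    have hF0mem : ∀ z, F0 z ∈ stdSimplex ℝ (Fin k) := by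
      intro z
      constructor
      · exact fun i => div_nonneg (hg0 i z) (hSpos z).le
      · rw [← Finset.sum_div, div_self (hSpos z).ne']
    set L : (Fin k → ℝ) ≃ₗ[ℝ] EuclideanSpace ℝ (Fin k) :=
      (WithLp.linearEquiv 2 ℝ (Fin k → ℝ)).symm with hLdef
    have hLc : Continuous (⇑L) := L.toLinearMap.continuous_of_finiteDimensional
    set w0 : Fin k → (Fin k → ℝ) := fun i j => if i = j then 1 else 0 with hw0def
    set vs : Finset (EuclideanSpace ℝ (Fin k)) := Finset.univ.image (fun i => L (w0 i)) with hvs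
    set P : Set (EuclideanSpace ℝ (Fin k)) := convexHull ℝ (↑vs : Set _) with hPdef
    have hPim : P = ⇑L '' (stdSimplex ℝ (Fin k)) := by
      rw [hPdef, ← convexHull_basis_eq_stdSimplex,
        show (⇑L : _ → _) = ⇑L.toLinearMap from rfl, LinearMap.image_convexHull]
      congr 1
      rw [hvs, Finset.coe_image, Finset.coe_univ, Set.image_univ, ← Set.range_comp]
      apply congrArg Set.range
      funext i
      simp only [Function.comp_apply, LinearEquiv.coe_coe]
      rw [hw0def]
    have hmem : ∀ z, L (F0 z) ∈ P := by
      intro z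
      rw [hPim]
      exact ⟨F0 z, hF0mem z, rfl⟩
    refine ⟨k, k, P, fun z => ⟨L (F0 z), hmem z⟩, ?_, ?_, ?_⟩
    · exact isPolyhedron_convexHull vs
        (le_trans (Finset.card_image_le.trans (by simp [hk])) (Nat.le_succ k))
    · exact Continuous.subtype_mk (hLc.comp hF0c) _
    · intro y
      apply setDiam_le hε.le
      intro z1 hz1 z2 hz2
      have h12 : F0 z1 = F0 z2 := by
        have hv : L (F0 z1) = L (F0 z2) := by
          have e1 : (⟨L (F0 z1), hmem z1⟩ : P) = y := hz1
          have e2 : (⟨L (F0 z2), hmem z2⟩ : P) = y := hz2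
          have := e1.trans e2.symm
          exact congrArg Subtype.val this
        exact L.injective hv
      obtain ⟨i, hi⟩ := hc z1
      have hgi : 0 < g i z1 := lt_max_of_lt_left (by linarith)
      have hFi : 0 < F0 z1 i := div_pos hgi (hSpos z1)
      have hFi2 : 0 < F0 z2 i := by rw [← h12]; exact hFi
      have hgi2 : 0 < g i z2 := by
        by_contra hcon
        push_neg at hcon
        have : g i z2 = 0 := le_antisymm hcon (hg0 i z2)
        rw [hF0def] at hFi2
        simp only [this, zero_div] at hFi2
        exact lt_irrefl 0 hFi2
      have hd2 : dist z2 (c i) < ε / 3 := by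
        by_contra hcon
        push_neg at hcon
        have : g i z2 = 0 := max_eq_right (by linarith)
        exact lt_irrefl 0 (this ▸ hgi2)
      calc dist z1 z2 ≤ dist z1 (c i) + dist (c i) z2 := dist_triangle _ _ _
        _ = dist z1 (c i) + dist z2 (c i) := by rw [dist_comm (c i)]
        _ ≤ ε := by linarith

end WidimAux

/-- Subadditivity of `Widim_ε` under products with the max metric. -/
theorem stmt1 (X Y : Type*) [MetricSpace X] [MetricSpace Y] [CompactSpace X] [CompactSpace Y]
    (ε : ℝ) (hε : 0 < ε) :
    widim (X × Y) (fun p q => max (dist p.1 q.1) (dist p.2 q.2)) ε ≤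
      widim X dist ε + widim Y dist ε := by
  classical
  obtain ⟨m₁, P, f, hP, hfc, hfd⟩ := Nat.sInf_mem (WidimAux.exists_widim_witness X hε)
  obtain ⟨m₂, Q, g, hQ, hgc, hgd⟩ := Nat.sInf_mem (WidimAux.exists_widim_witness Y hε)
  apply Nat.sInf_le
  set e := WidimAux.prodE m₁ m₂ with he
  have hec : Continuous (⇑e) := e.toLinearMap.continuous_of_finiteDimensional
  refine ⟨m₁ + m₂, ⇑e '' (P ×ˢ Q),
    fun p => ⟨e ((f p.1 : _), (g p.2 : _)),
      ⟨((f p.1 : _), (g p.2 : _)), ⟨(f p.1).2, (g p.2).2⟩, rfl⟩⟩,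
    WidimAux.isPolyhedron_image_prod hP hQ e, ?_, ?_⟩
  · exact Continuous.subtype_mk (hec.comp
      ((continuous_subtype_val.comp (hfc.comp continuous_fst)).prodMk
        (continuous_subtype_val.comp (hgc.comp continuous_snd)))) _
  · intro y
    apply WidimAux.setDiam_le hε.le
    intro p hp q hq
    have hval : e ((f p.1 : _), (g p.2 : _)) = e ((f q.1 : _), (g q.2 : _)) := by
      have := (Set.mem_singleton_iff.1 hp).trans (Set.mem_singleton_iff.1 hq).symm
      exact congrArg Subtype.val this
    have hpq := e.injective hval
    have h1 : f p.1 = f q.1 := Subtype.ext (congrArg Prod.fst hpq)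
    have h2 : g p.2 = g q.2 := Subtype.ext (congrArg Prod.snd hpq)
    have d1 : dist p.1 q.1 ≤ ε := by
      refine le_trans (WidimAux.dist_le_setDiam (s := f ⁻¹' {f q.1}) ?_ ?_) (hfd (f q.1))
      · exact h1
      · rfl
    have d2 : dist p.2 q.2 ≤ ε := by
      refine le_trans (WidimAux.dist_le_setDiam (s := g ⁻¹' {g q.2}) ?_ ?_) (hgd (g q.2))
      · exact h2
      · rfl
    exact max_le d1 d2
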